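/- Let P ⊂ ℝ² be the pentagon above with parameter a ∈ (1,2], and suppose u : P → ℝ satisfies Guillemin boundary conditions with S = −u^{ij}_{ij} affine-linear, S = A(x₁+x₂) + B. If the linear functional L_S(f) = ∫_{∂P} 2f dσ − ∫_P S f dx vanishes for f = 1, f = x₁, and f = x₂, then A = 48(1−a³)/(a⁶+6a⁵+9a⁴+4a³−3a²−6a+1) and B = 12(a⁵+7a⁴−2a³+2a²−5a+5)/(a⁶+6a⁵+9a⁴+4a³−3a²−6a+1). -/

import Mathlib

open MeasureTheory intervalIntegral

/-- The pentagon `P` with parameter `a`, cut out by `l₁ = 1+x₁`, `l₂ = 1+x₂`,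
`l₃ = a−1−x₁`, `l₄ = a−1−x₂`, `l₅ = a−1−x₁−x₂`. -/
def pent (a : ℝ) : Set (ℝ × ℝ) :=
  {p : ℝ × ℝ | 0 ≤ 1 + p.1 ∧ 0 ≤ 1 + p.2 ∧ 0 ≤ a - 1 - p.1 ∧
    0 ≤ a - 1 - p.2 ∧ 0 ≤ a - 1 - p.1 - p.2}

/-- The boundary integral `∫_{∂P} f dσ`, where `dσ` is the measure on each edge
normalized by `|dσ ∧ dl_r| = dx`: the four axis-parallel edges carry Lebesgue
length measure, and the slanted edge `x₁ + x₂ = a − 1` is parametrized by `x₁`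
(consistent with `dt ∧ dl₅ = ±dx₁ ∧ dx₂`). -/
noncomputable def bdryInt (a : ℝ) (f : ℝ × ℝ → ℝ) : ℝ :=
  (∫ t in (-1 : ℝ)..(a - 1), f (-1, t)) +
  (∫ t in (-1 : ℝ)..(a - 1), f (t, -1)) +
  (∫ t in (-1 : ℝ)..(0 : ℝ), f (a - 1, t)) +
  (∫ t in (-1 : ℝ)..(0 : ℝ), f (t, a - 1)) +
  (∫ t in (0 : ℝ)..(a - 1), f (t, a - 1 - t))

/-- The linear functional `L_S(f) = ∫_{∂P} 2f dσ − ∫_P S f dx` for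
`S = A(x₁+x₂) + B`. -/
noncomputable def LS (a A B : ℝ) (f : ℝ × ℝ → ℝ) : ℝ :=
  bdryInt a (fun p => 2 * f p) -
    ∫ p in pent a, (A * (p.1 + p.2) + B) * f p

/-- Interval integral of a cubic polynomial. -/
lemma ipoly (c0 c1 c2 c3 x y : ℝ) (f : ℝ → ℝ)
    (hf : ∀ t, f t = c0 + c1*t + c2*t^2 + c3*t^3) :
    ∫ t in x..y, f t =
      (c0*y + c1*y^2/2 + c2*y^3/3 + c3*y^4/4) -
      (c0*x + c1*x^2/2 + c2*x^3/3 + c3*x^4/4) := by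
  have hfe : f = fun t => c0 + c1*t + c2*t^2 + c3*t^3 := funext hf
  subst hfe
  have key : ∀ t : ℝ, HasDerivAt (fun s : ℝ => c0*s + c1*s^2/2 + c2*s^3/3 + c3*s^4/4)
      (c0 + c1*t + c2*t^2 + c3*t^3) t := by
    intro t
    have h := ((((hasDerivAt_id t).const_mul c0).add
        (((hasDerivAt_pow 2 t).const_mul c1).div_const 2)).add
        (((hasDerivAt_pow 3 t).const_mul c2).div_const 3)).add
        (((hasDerivAt_pow 4 t).const_mul c3).div_const 4)
    exact h.congr_deriv (by push_cast; ring)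
  exact intervalIntegral.integral_eq_sub_of_hasDerivAt (fun t _ => key t)
    ((by fun_prop : Continuous fun t : ℝ => c0 + c1*t + c2*t^2 + c3*t^3).intervalIntegrable x y)

lemma pent_closed (a : ℝ) : IsClosed (pent a) := by
  have : pent a = {p : ℝ × ℝ | 0 ≤ 1 + p.1} ∩ ({p : ℝ × ℝ | 0 ≤ 1 + p.2} ∩
      ({p : ℝ × ℝ | 0 ≤ a - 1 - p.1} ∩ ({p : ℝ × ℝ | 0 ≤ a - 1 - p.2} ∩
      {p : ℝ × ℝ | 0 ≤ a - 1 - p.1 - p.2}))) := rfl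
  rw [this]
  refine (isClosed_le continuous_const (by fun_prop)).inter
    ((isClosed_le continuous_const (by fun_prop)).inter
    ((isClosed_le continuous_const (by fun_prop)).inter
    ((isClosed_le continuous_const (by fun_prop)).inter
    (isClosed_le continuous_const (by fun_prop)))))

lemma pent_compact (a : ℝ) : IsCompact (pent a) := by
  refine IsCompact.of_isClosed_subset (isCompact_Icc (a := ((-1 : ℝ), (-1 : ℝ)))
    (b := (a - 1, a - 1))) (pent_closed a) ?_
  rintro ⟨x, y⟩ ⟨h1, h2, h3, h4, h5⟩
  simp only [Set.mem_Icc, Prod.mk_le_mk] at *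
  constructor <;> constructor <;> linarith

/-- Fubini decomposition of the pentagon integral into two iterated integrals. -/
lemma pent_int (a : ℝ) (ha : 1 < a) (f : ℝ × ℝ → ℝ) (hf : Continuous f) :
    ∫ p in pent a, f p =
      (∫ x in (-1 : ℝ)..0, ∫ y in (-1 : ℝ)..(a-1), f (x, y)) +
      ∫ x in (0 : ℝ)..(a-1), ∫ y in (-1 : ℝ)..(a-1-x), f (x, y) := by
  have hIP : IntegrableOn f (pent a) := hf.continuousOn.integrableOn_compact (pent_compact a)
  set T1 : Set (ℝ × ℝ) := Set.Icc (-1 : ℝ) 0 ×ˢ Set.Icc (-1 : ℝ) (a-1) with hT1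
  set T2 : Set (ℝ × ℝ) := pent a ∩ {p : ℝ × ℝ | 0 ≤ p.1} with hT2
  have hT1sub : T1 ⊆ pent a := by
    rintro ⟨x, y⟩ ⟨⟨hx1, hx2⟩, hy1, hy2⟩
    dsimp at *
    exact ⟨by linarith, by linarith, by linarith, by linarith, by linarith⟩
  have hsplit : pent a = T1 ∪ T2 := by
    ext ⟨x, y⟩
    constructor
    · rintro ⟨h1, h2, h3, h4, h5⟩
      dsimp at *
      rcases le_or_gt x 0 with h | h
      · exact Or.inl ⟨⟨by linarith, h⟩, by constructor <;> dsimp <;> linarith⟩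
      · exact Or.inr ⟨⟨h1, h2, h3, h4, h5⟩, le_of_lt h⟩
    · rintro (h | h)
      · exact hT1sub h
      · exact h.1
  have hT2m : MeasurableSet T2 :=
    ((pent_closed a).measurableSet).inter (measurableSet_le measurable_const measurable_fst)
  have hdisj : AEDisjoint volume T1 T2 := by
    have hsub : T1 ∩ T2 ⊆ ({(0 : ℝ)} ×ˢ (Set.univ : Set ℝ)) := by
      rintro ⟨x, y⟩ ⟨⟨⟨_, hx0⟩, _⟩, _, hx0'⟩
      exact ⟨le_antisymm hx0 hx0', trivial⟩
    refine measure_mono_null hsub ?_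
    rw [Measure.volume_eq_prod, Measure.prod_prod]
    simp
  have hi1 : IntegrableOn f T1 := hIP.mono_set hT1sub
  have hi2 : IntegrableOn f T2 := hIP.mono_set Set.inter_subset_left
  rw [hsplit, integral_union_ae hdisj hT2m.nullMeasurableSet hi1 hi2]
  congr 1
  · rw [hT1, Measure.volume_eq_prod, setIntegral_prod f (by rwa [← Measure.volume_eq_prod, ← hT1])]
    rw [integral_Icc_eq_integral_Ioc, ← intervalIntegral.integral_of_le (by linarith : (-1:ℝ) ≤ 0)]
    congr 1
    ext x
    rw [integral_Icc_eq_integral_Ioc,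
      ← intervalIntegral.integral_of_le (by linarith : (-1:ℝ) ≤ a - 1)]
  · have hIT2 : Integrable (T2.indicator f) := (integrable_indicator_iff hT2m).2 hi2
    rw [← MeasureTheory.integral_indicator hT2m, Measure.volume_eq_prod,
      integral_prod _ (by rwa [← Measure.volume_eq_prod])]
    have hinner : ∀ x : ℝ, (∫ y, T2.indicator f (x, y)) =
        (Set.Icc (0:ℝ) (a-1)).indicator
          (fun x => ∫ y in Set.Icc (-1 : ℝ) (a-1-x), f (x, y)) x := by
      intro x
      by_cases hx : x ∈ Set.Icc (0:ℝ) (a-1)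
      · rw [Set.indicator_of_mem hx]
        have : (fun y => T2.indicator f (x, y)) =
            (Set.Icc (-1 : ℝ) (a-1-x)).indicator (fun y => f (x, y)) := by
          funext y
          by_cases hy : y ∈ Set.Icc (-1 : ℝ) (a-1-x)
          · rw [Set.indicator_of_mem hy, Set.indicator_of_mem]
            obtain ⟨hx0, hx1⟩ := hx; obtain ⟨hy0, hy1⟩ := hy
            exact ⟨⟨by dsimp; linarith, by dsimp; linarith, by dsimp; linarith,
              by dsimp; linarith, by dsimp; linarith⟩, hx0⟩
          · rw [Set.indicator_of_notMem hy, Set.indicator_of_notMem]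
            rintro ⟨⟨h1, h2, h3, h4, h5⟩, h6⟩
            dsimp at *
            exact hy ⟨by linarith, by linarith⟩
        rw [this, MeasureTheory.integral_indicator measurableSet_Icc]
      · rw [Set.indicator_of_notMem hx]
        have : (fun y => T2.indicator f (x, y)) = fun _ => (0:ℝ) := by
          funext y
          rw [Set.indicator_of_notMem]
          rintro ⟨⟨h1, h2, h3, h4, h5⟩, h6⟩
          dsimp at *
          exact hx ⟨h6, by linarith⟩
        rw [this, integral_zero]
    simp only [hinner]
    rw [MeasureTheory.integral_indicator measurableSet_Icc,
      integral_Icc_eq_integral_Ioc,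
      ← intervalIntegral.integral_of_le (by linarith : (0:ℝ) ≤ a - 1)]
    refine intervalIntegral.integral_congr fun x hx => ?_
    rw [Set.uIcc_of_le (by linarith : (0:ℝ) ≤ a - 1)] at hx
    rw [integral_Icc_eq_integral_Ioc, ← intervalIntegral.integral_of_le]
    obtain ⟨_, hx1⟩ := hx
    linarith

lemma LS_one_eval (a A B : ℝ) (ha : 1 < a) :
    LS a A B (fun _ => 1) =
      2 + 6*a + A*(2*a - a^3/3 - 2/3) + B*(1/2 - a - a^2/2) := by
  simp only [LS, bdryInt]
  rw [pent_int a ha (fun p => (A * (p.1 + p.2) + B) * 1) (by fun_prop)]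
  have hi1 : ∀ x : ℝ, (∫ y in (-1:ℝ)..(a-1), (A * ((x,y).1 + (x,y).2) + B) * 1) =
      (a*B - a*A + a^2*A/2) + (a*A)*x + 0*x^2 + 0*x^3 := by
    intro x
    rw [ipoly (A*x+B) A 0 0 (-1) (a-1) (fun y => (A * ((x,y).1 + (x,y).2) + B) * 1)
      (fun t => by show (A*(x+t)+B)*1 = _; ring)]
    ring
  have hi2 : ∀ x : ℝ, (∫ y in (-1:ℝ)..(a-1-x), (A * ((x,y).1 + (x,y).2) + B) * 1) =
      (a*B - a*A + a^2*A/2) + (A - B)*x + (-(A/2))*x^2 + 0*x^3 := by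
    intro x
    rw [ipoly (A*x+B) A 0 0 (-1) (a-1-x) (fun y => (A * ((x,y).1 + (x,y).2) + B) * 1)
      (fun t => by show (A*(x+t)+B)*1 = _; ring)]
    ring
  simp only [hi1, hi2]
  rw [ipoly (a*B - a*A + a^2*A/2) (a*A) 0 0 (-1) 0
        (fun x => (a*B - a*A + a^2*A/2) + (a*A)*x + 0*x^2 + 0*x^3)
        (fun t => by beta_reduce; ring),
      ipoly (a*B - a*A + a^2*A/2) (A - B) (-(A/2)) 0 0 (a-1)
        (fun x => (a*B - a*A + a^2*A/2) + (A - B)*x + (-(A/2))*x^2 + 0*x^3)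
        (fun t => by beta_reduce; ring),
      ipoly 2 0 0 0 (-1) (a-1) (fun t => 2 * 1) (fun t => by norm_num),
      ipoly 2 0 0 0 (-1) 0 (fun t => 2 * 1) (fun t => by norm_num),
      ipoly 2 0 0 0 0 (a-1) (fun t => 2 * 1) (fun t => by norm_num)]
  ring

lemma LS_x1_eval (a A B : ℝ) (ha : 1 < a) :
    LS a A B (fun p => p.1) =
      -2 - 4*a + 2*a^2 + A*(11/24 - 11*a/6 + 3*a^2/4 + a^3/6 - a^4/8)
        + B*(a - 1/3 - a^3/6) := by
  simp only [LS, bdryInt]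
  rw [pent_int a ha (fun p => (A * (p.1 + p.2) + B) * p.1) (by fun_prop)]
  have hi1 : ∀ x : ℝ, (∫ y in (-1:ℝ)..(a-1), (A * ((x,y).1 + (x,y).2) + B) * (x,y).1) =
      0 + (a*B - a*A + a^2*A/2)*x + (a*A)*x^2 + 0*x^3 := by
    intro x
    rw [ipoly ((A*x+B)*x) (A*x) 0 0 (-1) (a-1)
      (fun y => (A * ((x,y).1 + (x,y).2) + B) * (x,y).1)
      (fun t => by show (A*(x+t)+B)*x = _; ring)]
    ring
  have hi2 : ∀ x : ℝ, (∫ y in (-1:ℝ)..(a-1-x), (A * ((x,y).1 + (x,y).2) + B) * (x,y).1) =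
      0 + (a*B - a*A + a^2*A/2)*x + (A - B)*x^2 + (-(A/2))*x^3 := by
    intro x
    rw [ipoly ((A*x+B)*x) (A*x) 0 0 (-1) (a-1-x)
      (fun y => (A * ((x,y).1 + (x,y).2) + B) * (x,y).1)
      (fun t => by show (A*(x+t)+B)*x = _; ring)]
    ring
  simp only [hi1, hi2]
  rw [ipoly 0 (a*B - a*A + a^2*A/2) (a*A) 0 (-1) 0
        (fun x => 0 + (a*B - a*A + a^2*A/2)*x + (a*A)*x^2 + 0*x^3)
        (fun t => by beta_reduce; ring),
      ipoly 0 (a*B - a*A + a^2*A/2) (A - B) (-(A/2)) 0 (a-1)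
        (fun x => 0 + (a*B - a*A + a^2*A/2)*x + (A - B)*x^2 + (-(A/2))*x^3)
        (fun t => by beta_reduce; ring),
      ipoly (-2) 0 0 0 (-1) (a-1) (fun t => 2 * -1) (fun t => by norm_num),
      ipoly 0 2 0 0 (-1) (a-1) (fun t => 2 * t) (fun t => by ring),
      ipoly (2*(a-1)) 0 0 0 (-1) 0 (fun t => 2 * (a-1)) (fun t => by ring),
      ipoly 0 2 0 0 (-1) 0 (fun t => 2 * t) (fun t => by ring),
      ipoly 0 2 0 0 0 (a-1) (fun t => 2 * t) (fun t => by ring)]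
  ring

/-- On the pentagon with parameter `a ∈ (1,2]`, if the affine
scalar curvature `S = A(x₁+x₂)+B` satisfies the constraints
`L_S(1) = L_S(x₁) = L_S(x₂) = 0`, then `A` and `B` are given by the stated
rational functions of `a`. -/
theorem stmt_12 (a A B : ℝ) (ha : 1 < a) (ha' : a ≤ 2)
    (h1 : LS a A B (fun _ => 1) = 0)
    (hx1 : LS a A B (fun p => p.1) = 0)
    (hx2 : LS a A B (fun p => p.2) = 0) :
    A = 48 * (1 - a ^ 3) /
        (a ^ 6 + 6 * a ^ 5 + 9 * a ^ 4 + 4 * a ^ 3 - 3 * a ^ 2 - 6 * a + 1) ∧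
    B = 12 * (a ^ 5 + 7 * a ^ 4 - 2 * a ^ 3 + 2 * a ^ 2 - 5 * a + 5) /
        (a ^ 6 + 6 * a ^ 5 + 9 * a ^ 4 + 4 * a ^ 3 - 3 * a ^ 2 - 6 * a + 1) := by
  rw [LS_one_eval a A B ha] at h1
  rw [LS_x1_eval a A B ha] at hx1
  have h0 : (0:ℝ) < a := by linarith
  have ha1 : (1:ℝ) ≤ a := le_of_lt ha
  have e1 : a^2 ≤ a^4 := pow_le_pow_right₀ ha1 (by norm_num)
  have e2 : a ≤ a^5 := by
    calc a = a^1 := (pow_one a).symm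
    _ ≤ a^5 := pow_le_pow_right₀ ha1 (by norm_num)
  have e3 : (0:ℝ) < a^3 := by positivity
  have e4 : (0:ℝ) < a^6 := by positivity
  have e5 : (0:ℝ) ≤ a^4 := by positivity
  have hD : a ^ 6 + 6 * a ^ 5 + 9 * a ^ 4 + 4 * a ^ 3 - 3 * a ^ 2 - 6 * a + 1 ≠ 0 := by
    have : (0:ℝ) < a ^ 6 + 6 * a ^ 5 + 9 * a ^ 4 + 4 * a ^ 3 - 3 * a ^ 2 - 6 * a + 1 := by
      nlinarith
    linarith
  constructor
  · rw [eq_div_iff hD]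
    linear_combination (-144*(a - 1/3 - a^3/6)) * h1 + (144*(1/2 - a - a^2/2)) * hx1
  · rw [eq_div_iff hD]
    linear_combination (144*(11/24 - 11*a/6 + 3*a^2/4 + a^3/6 - a^4/8)) * h1
      + (-144*(2*a - a^3/3 - 2/3)) * hx1
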